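/- Let p, q, j₀, k₀ be positive integers with p, q coprime, let l₀ ∈ {0,1}, and let a₀ > 0 satisfy a₀^{-2} = (−1)^{l₀}(k₀² − (p j₀/(q k₀))²). Then for every (j,k,l) ∈ ℤ² × {0,1} with λ_{j,k,l}(a₀) ≠ 0, one has |λ_{j,k,l}(a₀)| ≥ 1/(q k₀)². In particular the nonzero eigenvalues of the linearized operator are uniformly bounded away from zero. -/

import Mathlib

/-- The eigenvalue `λ_{j,k,l}(a) = (pj/q)² − k⁴ + (−1)^l a^{-2} k²`. -/
noncomputable def lam (p q : ℕ) (a : ℝ) (j k : ℤ) (l : Fin 2) : ℝ :=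
  ((p : ℝ) * j / q) ^ 2 - (k : ℝ) ^ 4 + (-1) ^ (l : ℕ) * a⁻¹ ^ 2 * (k : ℝ) ^ 2

theorem stmt7 (p q j₀ k₀ : ℕ) (hp : 0 < p) (hq : 0 < q) (hj₀ : 0 < j₀) (hk₀ : 0 < k₀)
    (hpq : Nat.Coprime p q) (l₀ : Fin 2) (a₀ : ℝ) (ha₀ : 0 < a₀)
    (ha : a₀⁻¹ ^ 2 = (-1) ^ (l₀ : ℕ) * ((k₀ : ℝ) ^ 2 - ((p : ℝ) * j₀ / ((q : ℝ) * k₀)) ^ 2)) :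
    ∀ (j k : ℤ) (l : Fin 2), lam p q a₀ j k l ≠ 0 →
      1 / ((q : ℝ) * k₀) ^ 2 ≤ |lam p q a₀ j k l| := by
  intro j k l hne
  have hq' : (q : ℝ) ≠ 0 := Nat.cast_ne_zero.mpr hq.ne'
  have hk' : (k₀ : ℝ) ≠ 0 := Nat.cast_ne_zero.mpr hk₀.ne'
  have hQ : (0 : ℝ) < ((q : ℝ) * k₀) ^ 2 := by positivity
  obtain ⟨n, hn⟩ : ∃ n : ℤ, ((q : ℝ) * k₀) ^ 2 * lam p q a₀ j k l = n := by
    refine ⟨((p : ℤ) * j * k₀) ^ 2 - k ^ 4 * q ^ 2 * k₀ ^ 2 +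
      (-1) ^ (l : ℕ) * (-1) ^ (l₀ : ℕ) *
        (k ^ 2 * ((q : ℤ) ^ 2 * k₀ ^ 4 - (p : ℤ) ^ 2 * j₀ ^ 2)), ?_⟩
    simp only [lam, ha]
    push_cast
    field_simp
  have hn0 : n ≠ 0 := by
    intro h
    rw [h] at hn
    simp only [Int.cast_zero] at hn
    rcases mul_eq_zero.mp hn with h | h
    · exact absurd h hQ.ne'
    · exact hne h
  have h1 : (1 : ℝ) ≤ |(n : ℝ)| := by
    rw [← Int.cast_abs]
    exact_mod_cast Int.one_le_abs hn0
  have hlam : lam p q a₀ j k l = n / ((q : ℝ) * k₀) ^ 2 := by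
    field_simp
    linarith [hn]
  rw [hlam, abs_div, abs_of_pos hQ, div_le_div_iff₀ hQ hQ]
  nlinarith [h1, hQ]
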